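/- PC symmetry is inherited by the flattened Hamiltonian: let H be an N×N complex Hermitian invertible matrix and C an N×N unitary matrix with C·conj(H)·C† = −H. Then C·conj(sign(H))·C† = −sign(H), where sign(H) is obtained by applying the real sign function to H via the continuous functional calculus. -/
import Mathlib

open Matrix

def mconj {m n : Type*} (M : Matrix m n ℂ) : Matrix m n ℂ :=
  M.map (starRingEnd ℂ)

lemma mconj_mul {n : Type*} [Fintype n] (A B : Matrix n n ℂ) :
    mconj (A * B) = mconj A * mconj B := by
  ext i j
  simp [mconj, Matrix.mul_apply, map_sum]

lemma mconj_star {n : Type*} [Fintype n] (A : Matrix n n ℂ) :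
    mconj (star A) = star (mconj A) := by
  ext i j
  simp [mconj, Matrix.star_apply]

noncomputable def phi {N : ℕ} (C : Matrix (Fin N) (Fin N) ℂ)
    (hC : C * Cᴴ = 1) (hC' : Cᴴ * C = 1) :
    Matrix (Fin N) (Fin N) ℂ →⋆ₐ[ℝ] Matrix (Fin N) (Fin N) ℂ where
  toFun x := C * mconj x * Cᴴ
  map_one' := by simp [mconj, hC]
  map_mul' x y := by
    show C * mconj (x*y) * Cᴴ = _
    have h : C * mconj x * Cᴴ * (C * mconj y * Cᴴ)
        = C * mconj x * (Cᴴ * C) * mconj y * Cᴴ := by noncomm_ring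
    rw [mconj_mul, h, hC']
    noncomm_ring
  map_zero' := by simp [mconj]
  map_add' x y := by
    show C * mconj (x+y) * Cᴴ = C * mconj x * Cᴴ + C * mconj y * Cᴴ
    have : mconj (x + y) = mconj x + mconj y := by ext i j; simp [mconj]
    rw [this, Matrix.mul_add, Matrix.add_mul]
  commutes' r := by
    show C * mconj _ * Cᴴ = _
    have : mconj ((algebraMap ℝ (Matrix (Fin N) (Fin N) ℂ)) r) =
        (algebraMap ℝ (Matrix (Fin N) (Fin N) ℂ)) r := by
      ext i j
      simp [mconj, Matrix.algebraMap_matrix_apply]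
      split <;> simp [Complex.conj_ofReal]
    rw [this]
    rw [Algebra.algebraMap_eq_smul_one]
    rw [Matrix.mul_smul, Matrix.smul_mul, Matrix.mul_one, hC]
  map_star' x := by
    show C * mconj (star x) * Cᴴ = star (C * mconj x * Cᴴ)
    rw [mconj_star]
    simp [star_eq_conjTranspose, Matrix.conjTranspose_mul, Matrix.mul_assoc]

/-- PC symmetry is inherited by the flattened Hamiltonian: if `H` is Hermitian and
invertible and `C` is unitary with `C·conj(H)·C† = −H`, then
`C·conj(sign(H))·C† = −sign(H)`, where `sign(H)` is the sign function of `H` via the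
continuous functional calculus. -/
theorem PC_symmetry_of_flattened_hamiltonian {N : ℕ}
    (H C : Matrix (Fin N) (Fin N) ℂ)
    (hH : H.IsHermitian)
    (hinv : IsUnit H)
    (hC : C * Cᴴ = 1) (hC' : Cᴴ * C = 1)
    (hPC : C * mconj H * Cᴴ = -H) :
    C * mconj (hH.cfc Real.sign) * Cᴴ = -(hH.cfc Real.sign) := by
  have hsa : IsSelfAdjoint H := hH
  have hfin : (spectrum ℝ H).Finite := Set.toFinite _
  have hcont : ∀ (f : ℝ → ℝ) (s : Set ℝ), s.Finite → ContinuousOn f s := by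
    intro f s hs
    rw [continuousOn_iff_continuous_restrict]
    have := hs.to_subtype
    fun_prop
  have hφ : Continuous (phi C hC hC') := by
    have : (phi C hC hC' : Matrix (Fin N) (Fin N) ℂ → Matrix (Fin N) (Fin N) ℂ) =
        fun x => C * mconj x * Cᴴ := rfl
    rw [this]
    have hm : Continuous (fun x : Matrix (Fin N) (Fin N) ℂ => mconj x) := by
      apply continuous_matrix
      intro i j
      exact Complex.continuous_conj.comp ((continuous_apply j).comp (continuous_apply i))
    fun_prop
  have hsaφ : IsSelfAdjoint (phi C hC hC' H) := (hsa.map (phi C hC hC'))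
  have key := StarAlgHomClass.map_cfc (phi C hC hC') Real.sign H (hcont _ _ (Set.toFinite _)) hφ hsa hsaφ
  have hφH : phi C hC hC' H = -H := hPC
  rw [← hH.cfc_eq]
  have : C * mconj (cfc Real.sign H) * Cᴴ = phi C hC hC' (cfc Real.sign H) := rfl
  rw [this, key, hφH]
  have hodd : ∀ x : ℝ, Real.sign (-x) = -Real.sign x := fun x => Real.sign_neg (r := x)
  calc cfc Real.sign (-H)
      = cfc (fun x => Real.sign (-x)) H := (cfc_comp_neg Real.sign H (hcont _ _ ((H.finite_real_spectrum).image _)) hsa).symm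
    _ = cfc (fun x => -Real.sign x) H := by exact cfc_congr fun x _ => hodd x
    _ = -cfc Real.sign H := cfc_neg Real.sign H
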